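/- Let F_q be a finite field, let c ∈ F_q be nonzero, let d > 1 with gcd(d, q-1) = 1, and let e be the inverse of d modulo q-1. Let a, b ∈ F_q. Then the number of pairs (x, y) ∈ F_q² satisfying (x+y)^d - c·x^d = b and c·(x+y+a)^d - (x+a)^d = c·b equals the number of pairs (x, y) ∈ F_q² satisfying (x+y)^e - c^{-e}·x^e = c^{-e}·a and c^{-e}·(x+y+b)^e - (x + b·c⁻¹)^e = c^{-e}·a. -/
import Mathlib


theorem stmt13 (F : Type*) [Field F] [Fintype F]
    (c : F) (hc : c ≠ 0) (d : ℕ) (hd : 1 < d)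
    (hgcd : Nat.gcd d (Fintype.card F - 1) = 1)
    (e : ℕ) (he1 : 1 ≤ e) (he2 : e < Fintype.card F - 1)
    (hed : e * d ≡ 1 [MOD Fintype.card F - 1])
    (a b : F) :
    Nat.card {xy : F × F //
      (xy.1 + xy.2) ^ d - c * xy.1 ^ d = b ∧
      c * (xy.1 + xy.2 + a) ^ d - (xy.1 + a) ^ d = c * b}
    = Nat.card {xy : F × F //
      (xy.1 + xy.2) ^ e - c⁻¹ ^ e * xy.1 ^ e = c⁻¹ ^ e * a ∧
      c⁻¹ ^ e * (xy.1 + xy.2 + b) ^ e - (xy.1 + b * c⁻¹) ^ e = c⁻¹ ^ e * a} := by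
  have hpow : ∀ (k : ℕ), k ≡ 1 [MOD Fintype.card F - 1] → 1 ≤ k → ∀ z : F, z ^ k = z := by
    intro k hk hk1 z
    rcases eq_or_ne z 0 with rfl | hz
    · rw [zero_pow (by omega)]
    · have hdvd : (Fintype.card F - 1) ∣ (k - 1) := (Nat.modEq_iff_dvd' hk1).mp hk.symm
      obtain ⟨t, ht⟩ := hdvd
      have hk2 : k = 1 + (Fintype.card F - 1) * t := by omega
      rw [hk2, pow_add, pow_one, pow_mul, FiniteField.pow_card_sub_one_eq_one z hz,
        one_pow, mul_one]
  have hde : ∀ z : F, (z ^ d) ^ e = z := by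
    intro z
    rw [← pow_mul]
    exact hpow (d * e) (by simpa [Nat.mul_comm] using hed) (Nat.mul_pos (by omega) (by omega)) z
  have hed2 : ∀ z : F, (z ^ e) ^ d = z := by
    intro z
    rw [← pow_mul]
    exact hpow (e * d) hed (Nat.mul_pos (by omega) (by omega)) z
  have hci : c⁻¹ * c = 1 := inv_mul_cancel₀ hc
  have hcc : (c⁻¹ : F) ^ e * c ^ e = 1 := by rw [← mul_pow, hci, one_pow]
  apply Nat.card_congr
  refine
    { toFun := fun p =>
        ⟨(c⁻¹ * ((p.1.1 + p.1.2) ^ d - b),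
          ((p.1.1 + p.1.2 + a) ^ d - b) - c⁻¹ * ((p.1.1 + p.1.2) ^ d - b)), ?_⟩
      invFun := fun p =>
        ⟨(p.1.1 ^ e, ((p.1.1 + p.1.2 + b) ^ e - a) - p.1.1 ^ e), ?_⟩
      left_inv := ?_
      right_inv := ?_ }
  · obtain ⟨⟨x, y⟩, h1, h2⟩ := p
    simp only at h1 h2 ⊢
    have k1 : c⁻¹ * ((x + y) ^ d - b) = x ^ d := by
      rw [show (x + y) ^ d - b = c * x ^ d from by linear_combination h1,
        ← mul_assoc, hci, one_mul]
    have k2 : (x + y + a) ^ d - b = c⁻¹ * (x + a) ^ d := by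
      linear_combination c⁻¹ * h2 - ((x + y + a) ^ d - b) * hci
    constructor
    · rw [show c⁻¹ * ((x + y) ^ d - b) + ((x + y + a) ^ d - b - c⁻¹ * ((x + y) ^ d - b))
        = c⁻¹ * (x + a) ^ d from by rw [← k2]; ring, k1, mul_pow]
      simp only [hde]
      ring
    · rw [show c⁻¹ * ((x + y) ^ d - b) + ((x + y + a) ^ d - b - c⁻¹ * ((x + y) ^ d - b)) + b
        = (x + y + a) ^ d from by ring,
        show c⁻¹ * ((x + y) ^ d - b) + b * c⁻¹ = c⁻¹ * (x + y) ^ d from by ring, mul_pow]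
      simp only [hde]
      ring
  · obtain ⟨⟨x, y⟩, h1, h2⟩ := p
    simp only at h1 h2 ⊢
    have hB : (x + y + b) ^ e - (c * x + b) ^ e = a := by
      rw [show x + b * c⁻¹ = c⁻¹ * (c * x + b) from by
        linear_combination (-x) * hci, mul_pow] at h2
      have hne : (c⁻¹ : F) ^ e ≠ 0 := pow_ne_zero _ (inv_ne_zero hc)
      apply mul_left_cancel₀ hne
      linear_combination h2
    have hC : (c * (x + y)) ^ e = x ^ e + a := by
      rw [mul_pow]
      linear_combination (c : F) ^ e * h1 + (x ^ e + a) * hcc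
    constructor
    · rw [show x ^ e + ((x + y + b) ^ e - a - x ^ e) = (c * x + b) ^ e from by
        linear_combination hB]
      simp only [hed2]
      ring
    · rw [show x ^ e + ((x + y + b) ^ e - a - x ^ e) + a = (x + y + b) ^ e from by ring,
        show x ^ e + a = (c * (x + y)) ^ e from hC.symm]
      simp only [hed2]
      ring
  · rintro ⟨⟨x, y⟩, h1, h2⟩
    have k1 : c⁻¹ * ((x + y) ^ d - b) = x ^ d := by
      rw [show (x + y) ^ d - b = c * x ^ d from by linear_combination h1,
        ← mul_assoc, hci, one_mul]
    ext <;> simp only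
    · rw [k1, hde]
    · rw [k1, show x ^ d + ((x + y + a) ^ d - b - x ^ d) + b = (x + y + a) ^ d from by ring,
        hde, hde]
      ring
  · rintro ⟨⟨x, y⟩, h1, h2⟩
    have hB : (x + y + b) ^ e - (c * x + b) ^ e = a := by
      rw [show x + b * c⁻¹ = c⁻¹ * (c * x + b) from by
        linear_combination (-x) * hci, mul_pow] at h2
      have hne : (c⁻¹ : F) ^ e ≠ 0 := pow_ne_zero _ (inv_ne_zero hc)
      apply mul_left_cancel₀ hne
      linear_combination h2
    ext <;> simp only
    · rw [show x ^ e + ((x + y + b) ^ e - a - x ^ e) = (c * x + b) ^ e from by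
        linear_combination hB]
      rw [hed2]
      linear_combination x * hci
    · rw [show x ^ e + ((x + y + b) ^ e - a - x ^ e) + a = (x + y + b) ^ e from by ring,
        show x ^ e + ((x + y + b) ^ e - a - x ^ e) = (c * x + b) ^ e from by
        linear_combination hB]
      rw [hed2, hed2]
      linear_combination (-x) * hci
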